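/- Let C_n be a cycle of length n > 3 with vertices 1,...,n and edges {i,i+1}, {1,n}. Then the matching number satisfies nu(C_n) = floor(n/2), and the maximum size of a restricted matching satisfies nu_0(C_n) = floor(n/2) - 1 for n >= 6 (and nu_0(C_4) = nu_0(C_5) = 1). -/

import Mathlib

open MvPolynomial

noncomputable section

abbrev SRing (K : Type) [Field K] (n : ℕ) := MvPolynomial (Fin n) K

def minGen {K : Type} [Field K] {n : ℕ} (J : Ideal (SRing K n)) : Set (Fin n →₀ ℕ) :=
  {e | (monomial e (1:K)) ∈ J ∧
    ∀ e' : Fin n →₀ ℕ, e' ≤ e → e' ≠ e → (monomial e' (1:K)) ∉ J}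

/-- a matching of a simple graph, recorded as a finite set of ordered pairs `(i,j)` with
`i < j`: edges of `G` that are pairwise disjoint -/
def IsMatching {n : ℕ} (G : SimpleGraph (Fin n)) (M : Finset (Fin n × Fin n)) : Prop :=
  (∀ p ∈ M, G.Adj p.1 p.2 ∧ p.1 < p.2) ∧
  ∀ p ∈ M, ∀ q ∈ M, p ≠ q →
    p.1 ≠ q.1 ∧ p.1 ≠ q.2 ∧ p.2 ≠ q.1 ∧ p.2 ≠ q.2

/-- the matching number `ν(G)` -/
def matchNum {n : ℕ} (G : SimpleGraph (Fin n)) : ℕ :=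
  sSup {k | ∃ M, IsMatching G M ∧ M.card = k}

/-- the edge `e` meets the edge `f` (as unordered pairs of vertices) -/
def meets {n : ℕ} (e f : Fin n × Fin n) : Prop :=
  e.1 = f.1 ∨ e.1 = f.2 ∨ e.2 = f.1 ∨ e.2 = f.2

/-- two (disjoint) edges form a gap in `G`: no edge of `G` meets both -/
def FormsGap {n : ℕ} (G : SimpleGraph (Fin n)) (e e' : Fin n × Fin n) : Prop :=
  ¬ ∃ a b, G.Adj a b ∧ meets (a, b) e ∧ meets (a, b) e'

/-- a restricted matching: a matching one of whose edges forms a gap with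
every other edge of the matching -/
def IsRestrictedMatching {n : ℕ} (G : SimpleGraph (Fin n)) (M : Finset (Fin n × Fin n)) : Prop :=
  IsMatching G M ∧ ∃ e ∈ M, ∀ e' ∈ M, e' ≠ e → FormsGap G e e'

/-- `ν₀(G)`: maximal size of a restricted matching, set to `1` if there is none -/
def resMatchNum {n : ℕ} (G : SimpleGraph (Fin n)) : ℕ :=
  max (sSup {k | ∃ M, IsRestrictedMatching G M ∧ M.card = k}) 1

/-- the `k`-th squarefree power `I(G)^{[k]}`: generated by the products of the
edges of the matchings of `G` of size `k` -/
def sqfreePower (K : Type) [Field K] {n : ℕ} (G : SimpleGraph (Fin n)) (k : ℕ) :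
    Ideal (SRing K n) :=
  Ideal.span {p | ∃ M : Finset (Fin n × Fin n), IsMatching G M ∧ M.card = k ∧
    p = ∏ q ∈ M, (X q.1 * X q.2)}

/-- a monomial ideal has linear quotients: for some ordering `u_1, …, u_t` of its minimal
monomial generators, each colon ideal `(u_1, …, u_{i-1}) : u_i` is generated by variables -/
def HasLinearQuotients {K : Type} [Field K] {n : ℕ} (J : Ideal (SRing K n)) : Prop :=
  ∃ (t : ℕ) (u : Fin t → (Fin n →₀ ℕ)), Function.Injective u ∧
    (∀ e, e ∈ minGen J ↔ ∃ i, u i = e) ∧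
    ∀ i : Fin t, ∃ V : Set (Fin n),
      Submodule.colon (Ideal.span ((fun j => (monomial (u j) (1:K))) '' {j | j < i}))
        (Ideal.span {monomial (u i) (1:K)}) =
      Ideal.span ((fun v => (X v : SRing K n)) '' V)

/-- the cycle graph of length `n` on `Fin n`: edges `{i, i+1}` and `{0, n-1}` -/
def cycleG (n : ℕ) : SimpleGraph (Fin n) where
  Adj i j := i ≠ j ∧ ((i:ℕ)+1 = j ∨ (j:ℕ)+1 = i ∨ ((i:ℕ) = 0 ∧ (j:ℕ) = n-1) ∨
    ((j:ℕ) = 0 ∧ (i:ℕ) = n-1))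
  symm := by
    constructor
    intro i j h
    exact ⟨h.1.symm, by tauto⟩
  loopless := by constructor; intro i h; exact h.1 rfl

lemma cycle_adj {n : ℕ} (x y : Fin n) :
    (cycleG n).Adj x y ↔ ((x:ℕ) ≠ (y:ℕ) ∧ ((x:ℕ)+1 = y ∨ (y:ℕ)+1 = x ∨
      ((x:ℕ) = 0 ∧ (y:ℕ) = n-1) ∨ ((y:ℕ) = 0 ∧ (x:ℕ) = n-1))) := by
  simp [cycleG, Fin.ext_iff]

lemma matching_verts_card {n : ℕ} {G : SimpleGraph (Fin n)} {M : Finset (Fin n × Fin n)}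
    (hM : IsMatching G M) :
    (M.biUnion fun p => ({p.1, p.2} : Finset (Fin n))).card = 2 * M.card := by
  classical
  rw [Finset.card_biUnion]
  · rw [Finset.sum_congr rfl (fun p hp => Finset.card_pair (ne_of_lt (hM.1 p hp).2)),
      Finset.sum_const, smul_eq_mul, mul_comm]
  · intro p hp q hq hpq
    have h := hM.2 p hp q hq hpq
    simp only [Finset.disjoint_left, Finset.mem_insert, Finset.mem_singleton]
    rintro x (rfl | rfl) (h1 | h1) <;> simp_all

lemma matching_card_le {n : ℕ} {G : SimpleGraph (Fin n)} {M : Finset (Fin n × Fin n)}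
    (hM : IsMatching G M) : 2 * M.card ≤ n := by
  calc 2 * M.card = _ := (matching_verts_card hM).symm
  _ ≤ Fintype.card (Fin n) := Finset.card_le_univ _
  _ = n := Fintype.card_fin n

lemma cycle_nbrs {n : ℕ} (hn : 4 ≤ n) {a b : Fin n} (hadj : (cycleG n).Adj a b)
    (hab : a < b) :
    ∃ a' b' : Fin n, (cycleG n).Adj a' a ∧ (cycleG n).Adj b' b ∧
      a' ≠ a ∧ a' ≠ b ∧ b' ≠ a ∧ b' ≠ b ∧ a' ≠ b' := by
  rw [cycle_adj] at hadj
  have hab' : (a:ℕ) < b := hab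
  refine ⟨⟨if (a:ℕ)+1 = (b:ℕ) then (if (a:ℕ) = 0 then n-1 else (a:ℕ)-1) else (a:ℕ)+1,
      by split_ifs <;> omega⟩,
    ⟨if (a:ℕ)+1 = (b:ℕ) then (if (b:ℕ) = n-1 then 0 else (b:ℕ)+1) else (b:ℕ)-1,
      by split_ifs <;> omega⟩, ?_, ?_, ?_, ?_, ?_, ?_, ?_⟩ <;>
  · simp only [cycle_adj, ne_eq, Fin.ext_iff, Fin.val_mk]
    split_ifs <;> omega

lemma matching_erase {n : ℕ} {G : SimpleGraph (Fin n)} {M : Finset (Fin n × Fin n)}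
    (hM : IsMatching G M) (e : Fin n × Fin n) : IsMatching G (M.erase e) :=
  ⟨fun p hp => hM.1 p (Finset.mem_of_mem_erase hp),
   fun p hp q hq => hM.2 p (Finset.mem_of_mem_erase hp) q (Finset.mem_of_mem_erase hq)⟩

lemma restricted_card_le {n : ℕ} (hn : 4 ≤ n) {M : Finset (Fin n × Fin n)}
    (hM : IsRestrictedMatching (cycleG n) M) : 2 * (M.card - 1) ≤ n - 4 := by
  classical
  obtain ⟨hm, e, he, hgap⟩ := hM
  obtain ⟨a', b', ha'a, hb'b, h1, h2, h3, h4, h5⟩ := cycle_nbrs hn (hm.1 e he).1 (hm.1 e he).2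
  have hab : e.1 ≠ e.2 := ne_of_lt (hm.1 e he).2
  set T : Finset (Fin n) := {e.1, e.2, a', b'} with hT
  have hTcard : T.card = 4 := by
    rw [hT, Finset.card_insert_of_notMem (by
        simp only [Finset.mem_insert, Finset.mem_singleton]
        push_neg
        exact ⟨hab, h1.symm, h3.symm⟩),
      Finset.card_insert_of_notMem (by
        simp only [Finset.mem_insert, Finset.mem_singleton]
        push_neg
        exact ⟨h2.symm, h4.symm⟩),
      Finset.card_pair h5]
  have hsub : (M.erase e).biUnion (fun p => ({p.1, p.2} : Finset (Fin n))) ⊆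
      Finset.univ \ T := by
    intro x hx
    simp only [Finset.mem_biUnion, Finset.mem_erase, Finset.mem_insert,
      Finset.mem_singleton] at hx
    obtain ⟨p, ⟨hpe, hp⟩, hxp⟩ := hx
    have hd := hm.2 p hp e he hpe
    have hg := hgap p hp hpe
    simp only [Finset.mem_sdiff, Finset.mem_univ, true_and, hT, Finset.mem_insert,
      Finset.mem_singleton]
    push_neg
    have hmp : meets (x, x) p ∨ True := Or.inr trivial
    refine ⟨?_, ?_, ?_, ?_⟩
    · rcases hxp with rfl | rfl; exacts [hd.1, hd.2.2.1]
    · rcases hxp with rfl | rfl; exacts [hd.2.1, hd.2.2.2]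
    · intro hx'
      refine hg ⟨a', e.1, ha'a, Or.inr (Or.inr (Or.inl rfl)), ?_⟩
      rcases hxp with h | h
      exacts [Or.inl (hx'.symm.trans h), Or.inr (Or.inl (hx'.symm.trans h))]
    · intro hx'
      refine hg ⟨b', e.2, hb'b, Or.inr (Or.inr (Or.inr rfl)), ?_⟩
      rcases hxp with h | h
      exacts [Or.inl (hx'.symm.trans h), Or.inr (Or.inl (hx'.symm.trans h))]
  have hcard := Finset.card_le_card hsub
  rw [matching_verts_card (matching_erase hm e), Finset.card_erase_of_mem he,
    Finset.card_sdiff_of_subset (Finset.subset_univ T), hTcard, Finset.card_univ,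
    Fintype.card_fin] at hcard
  exact hcard

lemma max_matching {n : ℕ} (hn : 3 < n) :
    ∃ M : Finset (Fin n × Fin n), IsMatching (cycleG n) M ∧ M.card = n / 2 := by
  classical
  refine ⟨Finset.univ.image (fun i : Fin (n/2) =>
    ((⟨2*i.val, by have := i.isLt; omega⟩ : Fin n),
     (⟨2*i.val+1, by have := i.isLt; omega⟩ : Fin n))), ⟨?_, ?_⟩, ?_⟩
  · intro p hp
    simp only [Finset.mem_image, Finset.mem_univ, true_and] at hp
    obtain ⟨i, rfl⟩ := hp
    exact ⟨by rw [cycle_adj]; simp, by simp [Fin.lt_def]⟩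
  · intro p hp q hq hpq
    simp only [Finset.mem_image, Finset.mem_univ, true_and] at hp hq
    obtain ⟨i, rfl⟩ := hp
    obtain ⟨j, rfl⟩ := hq
    simp only [ne_eq, Prod.mk.injEq, Fin.mk.injEq, not_and] at hpq ⊢
    refine ⟨?_, ?_, ?_, ?_⟩ <;> omega
  · rw [Finset.card_image_of_injOn (fun i _ j _ h => ?_), Finset.card_univ, Fintype.card_fin]
    simp only [Prod.mk.injEq, Fin.mk.injEq] at h
    exact Fin.ext (by omega)

lemma res_matching {n : ℕ} (hn : 6 ≤ n) :
    ∃ M, IsRestrictedMatching (cycleG n) M ∧ M.card = n / 2 - 1 := by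
  classical
  set e₀ : Fin n × Fin n := ((⟨0, by omega⟩ : Fin n), (⟨1, by omega⟩ : Fin n)) with he₀
  set M : Finset (Fin n × Fin n) := insert e₀ (Finset.univ.image (fun i : Fin ((n-4)/2) =>
      ((⟨2*i.val+3, by have := i.isLt; omega⟩ : Fin n),
       (⟨2*i.val+4, by have := i.isLt; omega⟩ : Fin n)))) with hM
  have hmem : ∀ p ∈ M, p = e₀ ∨ ∃ i : Fin ((n-4)/2),
      p = ((⟨2*i.val+3, by have := i.isLt; omega⟩ : Fin n),
           (⟨2*i.val+4, by have := i.isLt; omega⟩ : Fin n)) := by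
    intro p hp
    simp only [hM, Finset.mem_insert, Finset.mem_image, Finset.mem_univ, true_and] at hp
    rcases hp with h | ⟨i, h⟩
    exacts [Or.inl h, Or.inr ⟨i, h.symm⟩]
  refine ⟨M, ⟨⟨?_, ?_⟩, e₀, Finset.mem_insert_self _ _, ?_⟩, ?_⟩
  · intro p hp
    rcases hmem p hp with rfl | ⟨i, rfl⟩
    · exact ⟨by rw [cycle_adj]; simp [he₀], by simp [he₀, Fin.lt_def]⟩
    · exact ⟨by rw [cycle_adj]; simp, by simp [Fin.lt_def]⟩
  · intro p hp q hq hpq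
    rcases hmem p hp with rfl | ⟨i, rfl⟩ <;> rcases hmem q hq with rfl | ⟨j, rfl⟩
    · exact absurd rfl hpq
    · refine ⟨?_, ?_, ?_, ?_⟩ <;> simp only [he₀, ne_eq, Fin.ext_iff, Fin.val_mk] <;> omega
    · refine ⟨?_, ?_, ?_, ?_⟩ <;> simp only [he₀, ne_eq, Fin.ext_iff, Fin.val_mk] <;> omega
    · have hij : (i:ℕ) ≠ (j:ℕ) := fun h => hpq (by rw [show i = j from Fin.ext h])
      refine ⟨?_, ?_, ?_, ?_⟩ <;> simp only [ne_eq, Fin.ext_iff, Fin.val_mk] <;> omega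
  · intro p hp hpe
    rcases hmem p hp with rfl | ⟨i, rfl⟩
    · exact absurd rfl hpe
    · rintro ⟨x, y, hxy, hm1, hm2⟩
      rw [cycle_adj] at hxy
      have hi := i.isLt
      simp only [meets, he₀, Fin.ext_iff, Fin.val_mk] at hm1 hm2
      omega
  · rw [hM, Finset.card_insert_of_notMem (by
      simp only [Finset.mem_image, Finset.mem_univ, true_and, he₀, Prod.mk.injEq, Fin.mk.injEq,
        not_exists, not_and]
      intro i h
      omega),
      Finset.card_image_of_injOn (fun i _ j _ h => ?_), Finset.card_univ, Fintype.card_fin]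
    · omega
    · simp only [Prod.mk.injEq, Fin.mk.injEq] at h
      exact Fin.ext (by omega)

lemma sSup_eq_of {S : Set ℕ} {k : ℕ} (hk : k ∈ S) (hb : ∀ j ∈ S, j ≤ k) : sSup S = k :=
  le_antisymm (csSup_le ⟨k, hk⟩ hb) (le_csSup ⟨k, fun j hj => hb j hj⟩ hk)

lemma resMatch_small {n : ℕ} (h4 : 4 ≤ n) (h5 : n ≤ 5) : resMatchNum (cycleG n) = 1 := by
  rw [resMatchNum, max_eq_right]
  by_cases hS : {k | ∃ M, IsRestrictedMatching (cycleG n) M ∧ M.card = k}.Nonempty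
  · refine csSup_le hS ?_
    rintro j ⟨N, hN, rfl⟩
    have := restricted_card_le h4 hN
    omega
  · rw [Set.not_nonempty_iff_eq_empty.mp hS]
    simp

/-- For the cycle `C_n` (`n > 3`): `ν(C_n) = ⌊n/2⌋`, and `ν₀(C_n) = ⌊n/2⌋ - 1` for
`n ≥ 6`, while `ν₀(C_4) = ν₀(C_5) = 1`. -/
theorem stmt19 (n : ℕ) (hn : 3 < n) :
    matchNum (cycleG n) = n / 2 ∧
    (6 ≤ n → resMatchNum (cycleG n) = n / 2 - 1) ∧
    resMatchNum (cycleG 4) = 1 ∧ resMatchNum (cycleG 5) = 1 := by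
  refine ⟨?_, ?_, resMatch_small (by norm_num) (by norm_num),
    resMatch_small (by norm_num) (by norm_num)⟩
  · obtain ⟨M, hM, hMc⟩ := max_matching hn
    refine sSup_eq_of ⟨M, hM, hMc⟩ ?_
    rintro j ⟨N, hN, rfl⟩
    have := matching_card_le hN
    omega
  · intro h6
    obtain ⟨M, hM, hMc⟩ := res_matching h6
    have hs : sSup {k | ∃ M, IsRestrictedMatching (cycleG n) M ∧ M.card = k} = n / 2 - 1 := by
      refine sSup_eq_of ⟨M, hM, hMc⟩ ?_
      rintro j ⟨N, hN, rfl⟩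
      have := restricted_card_le (by omega) hN
      omega
    rw [resMatchNum, hs, max_eq_left (by omega)]

end
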